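/- Let (λ_j)_{j≥0} be a sequence of real numbers with 0 ≤ λ_j ≤ 1 for all j. Then Σ_{j=0}^∞ λ_j · exp( Σ_{k=j}^∞ λ_k ) ≤ 2 · exp( Σ_{j=0}^∞ λ_j ), where both sides are interpreted in [0,∞]. -/
import Mathlib


open scoped ENNReal

/-- Extended exponential: `eexp x = exp x` for finite `x`, with `eexp ∞ = ∞`. -/
noncomputable def eexp (x : ℝ≥0∞) : ℝ≥0∞ :=
  if x = ∞ then ∞ else ENNReal.ofReal (Real.exp x.toReal)

private lemma key_ineq {x : ℝ} (h0 : 0 ≤ x) (h1 : x ≤ 1) :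
    x * Real.exp x ≤ 2 * (Real.exp x - 1) := by
  have h := Real.add_one_le_exp (x / 2)
  have hp := Real.exp_pos (x / 2)
  have hx : Real.exp x = Real.exp (x / 2) * Real.exp (x / 2) := by
    rw [← Real.exp_add]; ring_nf
  rw [hx]
  have h2 : (x / 2 + 1) * (x / 2 + 1) ≤ Real.exp (x / 2) * Real.exp (x / 2) :=
    mul_le_mul h h (by linarith) hp.le
  nlinarith [mul_le_mul_of_nonneg_left h2 (by linarith : (0:ℝ) ≤ 2 - x),
    mul_nonneg h0 (by linarith : (0:ℝ) ≤ 1 - x),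
    mul_nonneg (mul_nonneg h0 h0) (by linarith : (0:ℝ) ≤ 1 - x)]

/-- summation by parts estimate (6.14): if `0 ≤ λ_j ≤ 1` for all `j`, then
`Σ_{j=0}^∞ λ_j exp(Σ_{k=j}^∞ λ_k) ≤ 2 exp(Σ_{j=0}^∞ λ_j)` in `[0,∞]`. -/
theorem statement18 (lam : ℕ → ℝ) (hlam : ∀ j, 0 ≤ lam j ∧ lam j ≤ 1) :
    (∑' j : ℕ, ENNReal.ofReal (lam j)
        * eexp (∑' k : ℕ, if j ≤ k then ENNReal.ofReal (lam k) else 0))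
      ≤ 2 * eexp (∑' j : ℕ, ENNReal.ofReal (lam j)) := by
  by_cases htop : (∑' j : ℕ, ENNReal.ofReal (lam j)) = ∞
  · rw [htop]
    have h1 : eexp ∞ = ∞ := if_pos rfl
    rw [h1, ENNReal.mul_top (by norm_num)]
    exact le_top
  · have hnn : ∀ j, 0 ≤ lam j := fun j => (hlam j).1
    have hsum : Summable lam := by
      have h := ENNReal.summable_toReal htop
      have he : (fun j => (ENNReal.ofReal (lam j)).toReal) = lam :=
        funext fun j => ENNReal.toReal_ofReal (hnn j)
      rwa [he] at h
    set tail : ℕ → ℝ := fun j => ∑' k, if j ≤ k then lam k else 0 with htaildef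
    have htail : ∀ j, Summable (fun k => if j ≤ k then lam k else 0) := by
      intro j
      exact (hsum.indicator {k | j ≤ k}).congr fun k => by
        by_cases hk : j ≤ k <;> simp [Set.indicator_apply, Set.mem_setOf_eq, hk]
    have htail_nn : ∀ j, 0 ≤ tail j := fun j =>
      tsum_nonneg fun k => by split_ifs with h; exacts [hnn k, le_rfl]
    have hrec : ∀ j, tail j = lam j + tail (j + 1) := by
      intro j
      have h1 := Summable.tsum_eq_add_tsum_ite (htail j) j
      rw [htaildef]
      simp only
      rw [h1, if_pos (le_refl j)]
      congr 1
      apply tsum_congr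
      intro k
      by_cases hk : j + 1 ≤ k
      · rw [if_neg (by omega), if_pos (by omega), if_pos hk]
      · by_cases hk2 : k = j
        · rw [if_pos hk2, if_neg hk]
        · rw [if_neg hk2, if_neg (by omega), if_neg hk]
    have htail0 : tail 0 = ∑' j, lam j :=
      tsum_congr fun k => if_pos (Nat.zero_le k)
    have hmain : ∀ N, (∑ j ∈ Finset.range N, lam j * Real.exp (tail j))
        + 2 * Real.exp (tail N) ≤ 2 * Real.exp (tail 0) := by
      intro N
      induction N with
      | zero => simp
      | succ n ih =>
        rw [Finset.sum_range_succ]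
        have hk := key_ineq (hnn n) (hlam n).2
        have hstep : lam n * Real.exp (tail n) + 2 * Real.exp (tail (n + 1))
            ≤ 2 * Real.exp (tail n) := by
          have ht : tail n = lam n + tail (n + 1) := hrec n
          rw [ht, Real.exp_add]
          have hp := (Real.exp_pos (tail (n + 1))).le
          nlinarith [mul_le_mul_of_nonneg_right hk hp]
        linarith
    have hrange : ∀ N, (∑ j ∈ Finset.range N, lam j * Real.exp (tail j))
        ≤ 2 * Real.exp (tail 0) := by
      intro N
      have := hmain N
      nlinarith [(Real.exp_pos (tail N)).le]
    have hfin : ∀ j, (∑' k, if j ≤ k then ENNReal.ofReal (lam k) else 0)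
        = ENNReal.ofReal (tail j) := by
      intro j
      rw [htaildef]
      simp only
      rw [ENNReal.ofReal_tsum_of_nonneg
        (fun k => by split_ifs with h; exacts [hnn k, le_rfl]) (htail j)]
      apply tsum_congr
      intro k
      split_ifs <;> simp
    have heexp : ∀ r : ℝ, 0 ≤ r → eexp (ENNReal.ofReal r) = ENNReal.ofReal (Real.exp r) := by
      intro r hr
      rw [eexp, if_neg ENNReal.ofReal_ne_top, ENNReal.toReal_ofReal hr]
    have hS : (∑' j, ENNReal.ofReal (lam j)) = ENNReal.ofReal (∑' j, lam j) :=
      (ENNReal.ofReal_tsum_of_nonneg hnn hsum).symm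
    have hSnn : 0 ≤ ∑' j, lam j := tsum_nonneg hnn
    calc (∑' j : ℕ, ENNReal.ofReal (lam j)
          * eexp (∑' k : ℕ, if j ≤ k then ENNReal.ofReal (lam k) else 0))
        = ∑' j, ENNReal.ofReal (lam j * Real.exp (tail j)) := by
          apply tsum_congr
          intro j
          rw [hfin j, heexp _ (htail_nn j), ← ENNReal.ofReal_mul (hnn j)]
      _ ≤ ENNReal.ofReal (2 * Real.exp (∑' j, lam j)) := by
          rw [ENNReal.tsum_eq_iSup_sum]
          apply iSup_le
          intro s
          obtain ⟨N, hN⟩ := s.exists_nat_subset_range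
          calc (∑ j ∈ s, ENNReal.ofReal (lam j * Real.exp (tail j)))
              ≤ ∑ j ∈ Finset.range N, ENNReal.ofReal (lam j * Real.exp (tail j)) :=
                Finset.sum_le_sum_of_subset hN
            _ = ENNReal.ofReal (∑ j ∈ Finset.range N, lam j * Real.exp (tail j)) :=
                (ENNReal.ofReal_sum_of_nonneg fun j _ =>
                  mul_nonneg (hnn j) (Real.exp_pos _).le).symm
            _ ≤ ENNReal.ofReal (2 * Real.exp (∑' j, lam j)) := by
                apply ENNReal.ofReal_le_ofReal
                rw [← htail0]
                exact hrange N
      _ = 2 * eexp (∑' j, ENNReal.ofReal (lam j)) := by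
          rw [hS, heexp _ hSnn, ENNReal.ofReal_mul (by norm_num : (0:ℝ) ≤ 2),
            ENNReal.ofReal_ofNat]
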